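/- Let C = {x ∈ ℝⁿ : Ax ≤ b} be nonempty with the surrogate-gradient map defined by P_{H_x} = I when x ∈ int(C). If P_C(x) lies in the interior of all but exactly one of the half-spaces Cᵢ = {y : Aᵢᵀy ≤ bᵢ} (say it lies on the boundary of C_k only), then in a neighborhood of x the projection P_C coincides with the projection onto the half-space C_k, and its Jacobian at x equals I − a a^T/‖a‖² with a = A_k if x ∉ C, which equals P_{H_x}. -/

import Mathlib

open scoped RealInnerProductSpace

set_option maxHeartbeats 1000000

/-- Exactness of the surrogate gradient on a facet: if `P_C x` lies on the boundary of
exactly one defining half-space `C_k` (with non-redundant `A k ≠ 0`) and in the interior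
of all the others, and `x ∉ C`, then near `x` the projection `P_C` coincides with the
projection onto the half-space `C_k`, its Jacobian at `x` is `I − a aᵀ/‖a‖²` with
`a = A k`, and this Jacobian equals the surrogate `P_{H_x} = I − d_x d_xᵀ`. -/
theorem stmt18 {n m : ℕ} (A : Fin m → EuclideanSpace ℝ (Fin n)) (b : Fin m → ℝ)
    (C : Set (EuclideanSpace ℝ (Fin n))) (hC : C = {y | ∀ i, ⟪A i, y⟫ ≤ b i})
    (hCne : C.Nonempty)
    (projC : EuclideanSpace ℝ (Fin n) → EuclideanSpace ℝ (Fin n))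
    (hproj : ∀ y, projC y ∈ C ∧ ∀ w ∈ C, ‖y - projC y‖ ≤ ‖y - w‖)
    (x : EuclideanSpace ℝ (Fin n)) (hx : x ∉ C)
    (k : Fin m) (hAk : A k ≠ 0)
    (hk : ⟪A k, projC x⟫ = b k)
    (hothers : ∀ i, i ≠ k → ⟪A i, projC x⟫ < b i)
    (d : EuclideanSpace ℝ (Fin n)) (hd : d = ‖x - projC x‖⁻¹ • (x - projC x))
    (M : EuclideanSpace ℝ (Fin n) →L[ℝ] EuclideanSpace ℝ (Fin n))
    (hM : M = ContinuousLinearMap.id ℝ (EuclideanSpace ℝ (Fin n)) -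
      (‖A k‖ ^ 2)⁻¹ • (innerSL ℝ (A k)).smulRight (A k)) :
    (∃ U ∈ nhds x, ∀ y ∈ U,
        projC y = y + min 0 ((b k - ⟪A k, y⟫) / ‖A k‖ ^ 2) • A k) ∧
      HasFDerivAt projC M x ∧
      ∀ v, M v = v - ⟪d, v⟫ • d := by
  set p := projC x with hp
  have hpC : p ∈ C := (hproj x).1
  have hmin : ∀ w ∈ C, ‖x - p‖ ≤ ‖x - w‖ := (hproj x).2
  have hAknorm : (0:ℝ) < ‖A k‖ := norm_pos_iff.mpr hAk
  have hAk2 : (0:ℝ) < ‖A k‖ ^ 2 := by positivity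
  -- Key: directional inequality
  have key : ∀ v : EuclideanSpace ℝ (Fin n), ⟪A k, v⟫ ≤ 0 → ⟪x - p, v⟫ ≤ 0 := by
    intro v hv
    have hmem : ∀ᶠ ε : ℝ in nhdsWithin 0 (Set.Ioi 0), p + ε • v ∈ C := by
      have hothersev : ∀ᶠ ε : ℝ in nhdsWithin 0 (Set.Ioi 0),
          ∀ i, i ≠ k → ⟪A i, p + ε • v⟫ < b i := by
        rw [Filter.eventually_all]
        intro i
        by_cases hi : i = k
        · exact Filter.Eventually.of_forall (fun ε h => absurd hi h)
        · have hc : Continuous fun ε : ℝ => ⟪A i, p + ε • v⟫ := by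
            apply Continuous.inner continuous_const
            exact continuous_const.add (continuous_id.smul continuous_const)
          have h0 : ⟪A i, p + (0:ℝ) • v⟫ < b i := by
            simpa using hothers i hi
          have : ∀ᶠ ε : ℝ in nhds 0, ⟪A i, p + ε • v⟫ < b i :=
            (hc.continuousAt (x := (0:ℝ))).eventually_lt continuousAt_const h0
          exact (this.filter_mono nhdsWithin_le_nhds).mono fun ε h _ => h
      filter_upwards [hothersev, self_mem_nhdsWithin] with ε hoth hε
      rw [hC]
      intro i
      by_cases hi : i = k
      · subst hi
        have : ⟪A i, p + ε • v⟫ = b i + ε * ⟪A i, v⟫ := by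
          rw [inner_add_right, real_inner_smul_right, hk]
        rw [this]
        nlinarith [le_of_lt (Set.mem_Ioi.mp hε)]
      · exact le_of_lt (hoth i hi)
    have hineq : ∀ᶠ ε : ℝ in nhdsWithin 0 (Set.Ioi 0),
        ⟪x - p, v⟫ ≤ ε / 2 * ‖v‖ ^ 2 := by
      filter_upwards [hmem, self_mem_nhdsWithin] with ε hC' hε
      have hεpos : (0:ℝ) < ε := hε
      have h1 : ‖x - p‖ ≤ ‖x - (p + ε • v)‖ := hmin _ hC'
      have h2 : ‖x - p‖ ^ 2 ≤ ‖(x - p) - ε • v‖ ^ 2 := by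
        have : x - (p + ε • v) = (x - p) - ε • v := by abel
        rw [← this]
        exact pow_le_pow_left₀ (norm_nonneg _) h1 2
      have hexp : ‖(x - p) - ε • v‖ ^ 2
          = ‖x - p‖ ^ 2 - 2 * ⟪x - p, ε • v⟫ + ‖ε • v‖ ^ 2 := norm_sub_sq_real _ _
      have hn : ‖ε • v‖ ^ 2 = ε ^ 2 * ‖v‖ ^ 2 := by
        rw [norm_smul, Real.norm_eq_abs, mul_pow, sq_abs]
      have hi : ⟪x - p, ε • v⟫ = ε * ⟪x - p, v⟫ := real_inner_smul_right _ _ _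
      nlinarith
    have hne : (nhdsWithin (0:ℝ) (Set.Ioi 0)).NeBot := nhdsGT_neBot 0
    refine ge_of_tendsto (f := fun ε : ℝ => ε / 2 * ‖v‖ ^ 2) ?_ hineq
    have : Filter.Tendsto (fun ε : ℝ => ε / 2 * ‖v‖ ^ 2) (nhds 0)
        (nhds ((0:ℝ) / 2 * ‖v‖ ^ 2)) := by
      exact ((continuous_id.div_const 2).mul continuous_const).continuousAt
    simpa using this.mono_left nhdsWithin_le_nhds
  -- x - p is parallel to A k
  set t : ℝ := ⟪A k, x - p⟫ / ‖A k‖ ^ 2 with htdef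
  have ht0 : 0 ≤ t := by
    have := key (-(A k)) (by rw [inner_neg_right]; nlinarith [real_inner_self_eq_norm_sq (A k)])
    rw [inner_neg_right, real_inner_comm] at this
    have : 0 ≤ ⟪A k, x - p⟫ := by linarith
    exact div_nonneg this (le_of_lt hAk2)
  have hu : x - p = t • A k := by
    set w : EuclideanSpace ℝ (Fin n) := (x - p) - t • A k with hw
    have hAkw : ⟪A k, w⟫ = 0 := by
      rw [hw, inner_sub_right, real_inner_smul_right, htdef,
        real_inner_self_eq_norm_sq]
      field_simp; ring
    have h1 : ⟪x - p, w⟫ ≤ 0 := key w (le_of_eq hAkw)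
    have h2 : ⟪x - p, -w⟫ ≤ 0 := key (-w) (by rw [inner_neg_right, hAkw]; simp)
    rw [inner_neg_right] at h2
    have h3 : ⟪x - p, w⟫ = 0 := le_antisymm h1 (by linarith)
    have h5 : ⟪w, w⟫ = 0 := by
      have step : ⟪w, w⟫ = ⟪x - p, w⟫ - t * ⟪A k, w⟫ := by
        conv_lhs => rw [hw]
        rw [inner_sub_left, real_inner_smul_left]
      rw [step, h3, hAkw]; ring
    have h6 : w = 0 := by
      have := inner_self_eq_zero.mp h5
      exact this
    have : x - p = t • A k := by
      have := sub_eq_zero.mp (by rw [← hw]; exact h6)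
      exact this
    exact this
  have hune : x - p ≠ 0 := by
    intro h
    exact hx (by rwa [sub_eq_zero.mp h])
  have htpos : 0 < t := by
    rcases lt_or_eq_of_le ht0 with h | h
    · exact h
    · exfalso; apply hune; rw [hu, ← h, zero_smul]
  -- x lies strictly outside the halfspace k
  have hxk : ⟪A k, x⟫ = b k + t * ‖A k‖ ^ 2 := by
    have h1 : ⟪A k, x - p⟫ = t * ‖A k‖ ^ 2 := by
      rw [hu, real_inner_smul_right, real_inner_self_eq_norm_sq]
    rw [inner_sub_right] at h1
    linarith [hk]
  have hxgt : b k < ⟪A k, x⟫ := by nlinarith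
  -- the halfspace projection
  set f : EuclideanSpace ℝ (Fin n) → EuclideanSpace ℝ (Fin n) :=
    fun y => y + ((b k - ⟪A k, y⟫) / ‖A k‖ ^ 2) • A k with hf
  have hfx : f x = p := by
    rw [hf]
    have hco : (b k - ⟪A k, x⟫) / ‖A k‖ ^ 2 = -t := by
      rw [hxk]; field_simp; ring
    simp only [hco, neg_smul, ← sub_eq_add_neg, ← hu]
    abel
  -- pointwise identification of the projection with the halfspace projection
  have main : ∀ y, b k < ⟪A k, y⟫ → (∀ i, i ≠ k → ⟪A i, f y⟫ < b i) →
      projC y = f y := by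
    intro y hy hoth
    set s : ℝ := (⟪A k, y⟫ - b k) / ‖A k‖ ^ 2 with hs
    have hspos : 0 < s := div_pos (by linarith) hAk2
    have hfy : f y = y - s • A k := by
      show y + ((b k - ⟪A k, y⟫) / ‖A k‖ ^ 2) • A k = y - s • A k
      have : (b k - ⟪A k, y⟫) / ‖A k‖ ^ 2 = -s := by rw [hs]; ring
      rw [this, neg_smul, ← sub_eq_add_neg]
    have hAkfy : ⟪A k, f y⟫ = b k := by
      rw [hfy, inner_sub_right, real_inner_smul_right, real_inner_self_eq_norm_sq,
        hs]
      field_simp; ring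
    have hfyC : f y ∈ C := by
      rw [hC]
      intro i
      by_cases hi : i = k
      · subst hi; exact le_of_eq hAkfy
      · exact le_of_lt (hoth i hi)
    have hp'C : projC y ∈ C := (hproj y).1
    have hple : ‖y - projC y‖ ≤ ‖y - f y‖ := (hproj y).2 _ hfyC
    have hyq : y - f y = s • A k := by rw [hfy]; abel
    have hpb : ⟪A k, projC y⟫ ≤ b k := by
      have := hp'C; rw [hC] at this; exact this k
    have hinnerpos : 0 ≤ ⟪y - f y, f y - projC y⟫ := by
      rw [hyq, real_inner_smul_left]
      have hh : ⟪A k, f y - projC y⟫ = b k - ⟪A k, projC y⟫ := by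
        rw [inner_sub_right, hAkfy]
      rw [hh]
      exact mul_nonneg hspos.le (by linarith)
    have hexp : ‖y - projC y‖ ^ 2
        = ‖y - f y‖ ^ 2 + 2 * ⟪y - f y, f y - projC y⟫ + ‖f y - projC y‖ ^ 2 := by
      have hsplit : y - projC y = (y - f y) + (f y - projC y) :=
        (sub_add_sub_cancel y (f y) (projC y)).symm
      rw [hsplit, norm_add_sq_real]
    have hle2 : ‖y - projC y‖ ^ 2 ≤ ‖y - f y‖ ^ 2 :=
      pow_le_pow_left₀ (norm_nonneg _) hple 2
    have hzero : ‖f y - projC y‖ ^ 2 = 0 := by nlinarith [sq_nonneg ‖f y - projC y‖]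
    have : f y - projC y = 0 := by
      have hn0 : ‖f y - projC y‖ = 0 :=
        (pow_eq_zero_iff two_ne_zero).mp hzero
      exact norm_eq_zero.mp hn0
    exact (sub_eq_zero.mp this).symm
  -- the neighborhood
  have hcontk : Continuous fun y : EuclideanSpace ℝ (Fin n) => ⟪A k, y⟫ :=
    continuous_const.inner continuous_id
  have hU1 : ∀ᶠ y in nhds x, b k < ⟪A k, y⟫ :=
    (isOpen_lt continuous_const hcontk).mem_nhds hxgt
  have hcf : Continuous f := by
    rw [hf]

    exact continuous_id.add (((continuous_const.sub hcontk).div_const _).smul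
      continuous_const)
  have hU2 : ∀ᶠ y in nhds x, ∀ i, i ≠ k → ⟪A i, f y⟫ < b i := by
    rw [Filter.eventually_all]
    intro i
    by_cases hi : i = k
    · exact Filter.Eventually.of_forall fun y h => absurd hi h
    · have hci : Continuous fun y => ⟪A i, f y⟫ :=
        (continuous_const.inner continuous_id).comp hcf
      have h0 : ⟪A i, f x⟫ < b i := by rw [hfx]; exact hothers i hi
      have : ∀ᶠ y in nhds x, ⟪A i, f y⟫ < b i :=
        (isOpen_lt hci continuous_const).mem_nhds h0
      exact this.mono fun y h _ => h
  have hUev : ∀ᶠ y in nhds x, b k < ⟪A k, y⟫ ∧ ∀ i, i ≠ k → ⟪A i, f y⟫ < b i :=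
    hU1.and hU2
  have heq : projC =ᶠ[nhds x] f := hUev.mono fun y hy => main y hy.1 hy.2
  refine ⟨?_, ?_, ?_⟩
  · refine ⟨{y | b k < ⟪A k, y⟫ ∧ ∀ i, i ≠ k → ⟪A i, f y⟫ < b i}, hUev, ?_⟩
    intro y hy
    have hmin0 : min 0 ((b k - ⟪A k, y⟫) / ‖A k‖ ^ 2)
        = (b k - ⟪A k, y⟫) / ‖A k‖ ^ 2 :=
      min_eq_right (le_of_lt (div_neg_of_neg_of_pos (by linarith [hy.1]) hAk2))
    rw [hmin0]
    exact main y hy.1 hy.2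
  · have hfeq : ∀ y, f y = M y + (b k / ‖A k‖ ^ 2) • A k := by
      intro y
      rw [hM]
      show y + ((b k - ⟪A k, y⟫) / ‖A k‖ ^ 2) • A k = _
      simp only [ContinuousLinearMap.sub_apply, ContinuousLinearMap.id_apply,
        ContinuousLinearMap.smul_apply, ContinuousLinearMap.smulRight_apply,
        innerSL_apply_apply]
      rw [smul_smul]
      rw [show (b k - ⟪A k, y⟫) / ‖A k‖ ^ 2
        = b k / ‖A k‖ ^ 2 - (‖A k‖ ^ 2)⁻¹ * ⟪A k, y⟫ by ring]
      rw [sub_smul]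
      abel
    have h1 : HasFDerivAt (fun y => M y + (b k / ‖A k‖ ^ 2) • A k) M x :=
      M.hasFDerivAt.add_const _
    have h2 : HasFDerivAt f M x := by
      have : (fun y => M y + (b k / ‖A k‖ ^ 2) • A k) = f :=
        funext fun y => (hfeq y).symm
      rwa [this] at h1
    exact h2.congr_of_eventuallyEq heq
  · intro v
    have hnorm : ‖x - p‖ = t * ‖A k‖ := by
      rw [hu, norm_smul, Real.norm_eq_abs, abs_of_pos htpos]
    have hdval : d = ‖A k‖⁻¹ • A k := by
      rw [hd, hu, norm_smul, Real.norm_eq_abs, abs_of_pos htpos, smul_smul]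
      congr 1
      rw [mul_inv]
      field_simp
    rw [hM, hdval]
    simp only [ContinuousLinearMap.sub_apply, ContinuousLinearMap.id_apply,
      ContinuousLinearMap.smul_apply, ContinuousLinearMap.smulRight_apply,
      innerSL_apply_apply]
    rw [real_inner_smul_left]
    have hA0 : ‖A k‖ ≠ 0 := hAknorm.ne'
    match_scalars
    field_simp
    ring
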